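/- Let μ be a nonzero finite Borel measure on ℝ, let k ≥ 1 be an integer, and assume μ has a finite absolute moment of order 2(k+1), i.e. 𝔞_{2(k+1)}(μ) < ∞. Then for every y > 0 the derivative of θ_μ satisfies θ_μ′(y) = ∫_ℝ 2yt²/(y² + t²)² dμ(t) ≥ 2·𝔞_k(μ)²·y / (𝔞_{2(k−1)}(μ)·y⁴ + 2·𝔞_{2k}(μ)·y² + 𝔞_{2(k+1)}(μ)). -/

import Mathlib

open MeasureTheory Filter

/-- The Cauchy transform of a measure `μ` on `ℝ`. -/
noncomputable def cauchyTransform (μ : Measure ℝ) (z : ℂ) : ℂ :=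
  ∫ t : ℝ, (z - (t : ℂ))⁻¹ ∂μ

/-- The function `θ_μ(y) = -y · Im(G_μ(iy))`. -/
noncomputable def thetaFun (μ : Measure ℝ) (y : ℝ) : ℝ :=
  -(y * (cauchyTransform μ (Complex.I * y)).im)

/-- The `k`-th absolute moment `𝔞_k(μ) = ∫ |t|^k dμ(t)`. -/
noncomputable def absMoment (μ : Measure ℝ) (k : ℕ) : ℝ :=
  ∫ t : ℝ, |t| ^ k ∂μ

/-- For a nonzero finite Borel measure `μ` on `ℝ` with finite absolute moment
of order `2(k+1)` (`k ≥ 1`), and every `y > 0`, the derivative of `θ_μ` equals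
`∫ 2yt²/(y²+t²)² dμ(t)` and is bounded below by
`2·𝔞_k(μ)²·y / (𝔞_{2(k−1)}(μ)·y⁴ + 2·𝔞_{2k}(μ)·y² + 𝔞_{2(k+1)}(μ))`. -/
lemma theta_eq (μ : Measure ℝ) [IsFiniteMeasure μ] (y : ℝ) :
    thetaFun μ y = ∫ t : ℝ, y ^ 2 / (y ^ 2 + t ^ 2) ∂μ := by
  rcases eq_or_ne y 0 with rfl | hy
  · simp [thetaFun]
  · have hne : ∀ t : ℝ, (Complex.I * y - (t : ℂ)) ≠ 0 := by
      intro t h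
      have : (Complex.I * y - (t : ℂ)).im = y := by simp
      rw [h] at this; simp at this; exact hy this.symm
    have hcont : Continuous fun t : ℝ => (Complex.I * y - (t : ℂ))⁻¹ := by
      exact (Continuous.sub continuous_const (Complex.continuous_ofReal)).inv₀ hne
    have hint : Integrable (fun t : ℝ => (Complex.I * y - (t : ℂ))⁻¹) μ := by
      refine Integrable.mono' (integrable_const (|y|⁻¹)) hcont.aestronglyMeasurable ?_
      filter_upwards with t
      rw [norm_inv]
      refine inv_anti₀ (abs_pos.mpr hy) ?_
      calc |y| = |(Complex.I * y - (t : ℂ)).im| := by simp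
        _ ≤ ‖Complex.I * y - (t : ℂ)‖ := Complex.abs_im_le_norm _
    have him : (cauchyTransform μ (Complex.I * y)).im
        = ∫ t : ℝ, (-y) / (t ^ 2 + y ^ 2) ∂μ := by
      rw [cauchyTransform, ← RCLike.im_eq_complex_im, ← integral_im hint]
      simp only [RCLike.im_eq_complex_im]
      refine integral_congr_ae (Filter.Eventually.of_forall fun t => ?_)
      simp only []
      rw [Complex.inv_im]
      have h1 : (Complex.I * y - (t : ℂ)).im = y := by simp
      have h2 : Complex.normSq (Complex.I * y - (t : ℂ)) = t ^ 2 + y ^ 2 := by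
        simp [Complex.normSq_apply]; ring
      rw [h1, h2]
    rw [thetaFun, him, ← integral_const_mul, ← integral_neg]
    refine integral_congr_ae (Filter.Eventually.of_forall fun t => ?_)
    have ht : t ^ 2 + y ^ 2 ≠ 0 := by positivity
    field_simp
    ring

lemma inner_deriv (t x : ℝ) (hx : 0 < x) :
    HasDerivAt (fun x : ℝ => x ^ 2 / (x ^ 2 + t ^ 2))
      (2 * x * t ^ 2 / (x ^ 2 + t ^ 2) ^ 2) x := by
  have hne : x ^ 2 + t ^ 2 ≠ 0 := by positivity
  have h := (hasDerivAt_pow 2 x).div ((hasDerivAt_pow 2 x).add_const (t ^ 2)) hne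
  convert h using 1
  have : (2 : ℝ) = ((2 : ℕ) : ℝ) := by norm_num
  · rfl
  · rfl
  · rfl
  norm_num
  ring

lemma deriv_integral (μ : Measure ℝ) [IsFiniteMeasure μ] (y : ℝ) (hy : 0 < y) :
    Integrable (fun t : ℝ => 2 * y * t ^ 2 / (y ^ 2 + t ^ 2) ^ 2) μ ∧
    HasDerivAt (fun x : ℝ => ∫ t : ℝ, x ^ 2 / (x ^ 2 + t ^ 2) ∂μ)
      (∫ t : ℝ, 2 * y * t ^ 2 / (y ^ 2 + t ^ 2) ^ 2 ∂μ) y := by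
  have hcont : ∀ x : ℝ, 0 < x → Continuous fun t : ℝ => x ^ 2 / (x ^ 2 + t ^ 2) := by
    intro x hx
    exact continuous_const.div (by continuity) (fun t => by positivity)
  have hball : ∀ x ∈ Metric.ball y (y / 2), y / 2 < x := by
    intro x hx
    rw [Metric.mem_ball, Real.dist_eq, abs_lt] at hx
    linarith [hx.1]
  have := hasDerivAt_integral_of_dominated_loc_of_deriv_le (μ := μ)
    (F := fun x t => x ^ 2 / (x ^ 2 + t ^ 2))
    (F' := fun x t => 2 * x * t ^ 2 / (x ^ 2 + t ^ 2) ^ 2)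
    (x₀ := y) (bound := fun _ => 4 / y) (s := Metric.ball y (y / 2)) (Metric.ball_mem_nhds y (by positivity))
    ?_ ?_ ?_ ?_ ?_ ?_
  · exact this
  · filter_upwards [eventually_gt_nhds (by linarith : (0:ℝ) < y)] with x hx
    exact (hcont x hx).aestronglyMeasurable
  · refine Integrable.mono' (integrable_const (1 : ℝ)) (hcont y hy).aestronglyMeasurable ?_
    filter_upwards with t
    rw [Real.norm_of_nonneg (by positivity)]
    rw [div_le_one (by positivity)]
    nlinarith [sq_nonneg t]
  · exact (Continuous.div (by continuity) (by continuity)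
      (fun t => by positivity)).aestronglyMeasurable
  · filter_upwards with t
    intro x hx
    have hx2 := hball x hx
    have hx0 : 0 < x := by linarith
    rw [Real.norm_of_nonneg (by positivity)]
    rw [div_le_div_iff₀ (by positivity) hy]
    nlinarith [sq_nonneg (x ^ 2 - t ^ 2), sq_nonneg t,
      mul_nonneg (mul_nonneg hx0.le (sq_nonneg t)) (by linarith : (0:ℝ) ≤ 8 * x - y)]
  · exact integrable_const _
  · filter_upwards with t
    intro x hx
    exact inner_deriv t x (by linarith [hball x hx])

lemma mom_int (μ : Measure ℝ) [IsFiniteMeasure μ] {N : ℕ} (m : ℕ) (hm : m ≤ N)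
    (h : Integrable (fun t : ℝ => |t| ^ N) μ) : Integrable (fun t : ℝ => |t| ^ m) μ := by
  refine ((integrable_const (1 : ℝ)).add h).mono'
    ((continuous_abs.pow m).aestronglyMeasurable) ?_
  filter_upwards with t
  simp only [Pi.add_apply]
  rw [Real.norm_of_nonneg (by positivity)]
  rcases le_or_gt (|t|) 1 with h1 | h1
  · have : |t| ^ m ≤ 1 := pow_le_one₀ (abs_nonneg t) h1
    have h2 : (0:ℝ) ≤ |t| ^ N := by positivity
    linarith
  · have : |t| ^ m ≤ |t| ^ N := pow_le_pow_right₀ h1.le hm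
    linarith

lemma mom_nonneg (μ : Measure ℝ) (m : ℕ) : 0 ≤ ∫ t : ℝ, |t| ^ m ∂μ :=
  integral_nonneg fun t => by positivity

lemma cs_part (μ : Measure ℝ) [IsFiniteMeasure μ] (j : ℕ)
    (hmom : Integrable (fun t : ℝ => |t| ^ (2 * j + 4)) μ)
    (y : ℝ) (hy : 0 < y)
    (hf_int : Integrable (fun t : ℝ => 2 * y * t ^ 2 / (y ^ 2 + t ^ 2) ^ 2) μ) :
    (∫ t : ℝ, |t| ^ (j + 1) ∂μ) ^ 2 ≤
      (∫ t : ℝ, 2 * y * t ^ 2 / (y ^ 2 + t ^ 2) ^ 2 ∂μ) *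
      ∫ t : ℝ, (y ^ 4 * |t| ^ (2 * j) + 2 * y ^ 2 * |t| ^ (2 * j + 2) + |t| ^ (2 * j + 4)) / (2 * y) ∂μ := by
  set f : ℝ → ℝ := fun t => 2 * y * t ^ 2 / (y ^ 2 + t ^ 2) ^ 2 with hf
  set g : ℝ → ℝ := fun t =>
    (y ^ 4 * |t| ^ (2 * j) + 2 * y ^ 2 * |t| ^ (2 * j + 2) + |t| ^ (2 * j + 4)) / (2 * y) with hg
  have hfnn : ∀ t, 0 ≤ f t := fun t => by positivity
  have hgnn : ∀ t, 0 ≤ g t := fun t => by positivity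
  have m1 := mom_int μ (2 * j) (by omega) hmom
  have m2 := mom_int μ (2 * j + 2) (by omega) hmom
  have hg_int : Integrable g μ := (((m1.const_mul _).add (m2.const_mul _)).add hmom).div_const _
  have hfg : ∀ t, f t * g t = (|t| ^ (j + 1)) ^ 2 := by
    intro t
    have ha : |t| ^ 2 = t ^ 2 := sq_abs t
    have hne : y ^ 2 + t ^ 2 ≠ 0 := by positivity
    have e1 : |t| ^ (2 * j) = (t ^ 2) ^ j := by rw [pow_mul, ha]
    have e2 : |t| ^ (2 * j + 2) = (t ^ 2) ^ j * t ^ 2 := by rw [pow_add, e1, ha]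
    have e3 : |t| ^ (2 * j + 4) = (t ^ 2) ^ j * t ^ 2 * t ^ 2 := by
      rw [pow_add, e1, show |t| ^ 4 = (|t| ^ 2) ^ 2 by ring, ha]; ring
    have e4 : (|t| ^ (j + 1)) ^ 2 = (t ^ 2) ^ j * t ^ 2 := by
      rw [← pow_mul, show (j + 1) * 2 = 2 * j + 2 by ring, e2]
    show 2 * y * t ^ 2 / (y ^ 2 + t ^ 2) ^ 2 *
      ((y ^ 4 * |t| ^ (2 * j) + 2 * y ^ 2 * |t| ^ (2 * j + 2) + |t| ^ (2 * j + 4)) / (2 * y))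
      = (|t| ^ (j + 1)) ^ 2
    rw [e1, e2, e3, e4]
    field_simp
    ring
  have hcontf : Continuous f := by
    exact Continuous.div (by continuity) (by continuity) (fun t => by positivity)
  have hcontg : Continuous g := by
    exact Continuous.div (by continuity) continuous_const (fun t => by positivity)
  have hu : MemLp (fun t => Real.sqrt (f t)) 2 μ := by
    refine (memLp_two_iff_integrable_sq
      ((Real.continuous_sqrt.comp hcontf).aestronglyMeasurable)).mpr ?_
    exact hf_int.congr (ae_of_all _ fun t =>
      show f t = Real.sqrt (f t) ^ 2 from (Real.sq_sqrt (hfnn t)).symm)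
  have hv : MemLp (fun t => Real.sqrt (g t)) 2 μ := by
    refine (memLp_two_iff_integrable_sq
      ((Real.continuous_sqrt.comp hcontg).aestronglyMeasurable)).mpr ?_
    exact hg_int.congr (ae_of_all _ fun t =>
      show g t = Real.sqrt (g t) ^ 2 from (Real.sq_sqrt (hgnn t)).symm)
  have hpq : (2 : ℝ).HolderConjugate 2 := Real.HolderConjugate.two_two
  have key := integral_mul_le_Lp_mul_Lq_of_nonneg hpq
    (ae_of_all _ fun t => Real.sqrt_nonneg (f t))
    (ae_of_all _ fun t => Real.sqrt_nonneg (g t))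
    (by rwa [show ENNReal.ofReal (2:ℝ) = 2 by norm_num])
    (by rwa [show ENNReal.ofReal (2:ℝ) = 2 by norm_num])
  have hprod : ∀ t : ℝ, Real.sqrt (f t) * Real.sqrt (g t) = |t| ^ (j + 1) := by
    intro t
    rw [← Real.sqrt_mul (hfnn t), hfg t, Real.sqrt_sq (by positivity)]
  have hsq : ∀ x : ℝ, (0 ≤ x) → Real.sqrt x ^ (2:ℝ) = x := by
    intro x hh
    rw [show (2:ℝ) = ((2:ℕ):ℝ) by norm_num, Real.rpow_natCast]
    exact Real.sq_sqrt hh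
  have hIf : (0:ℝ) ≤ ∫ t, f t ∂μ := integral_nonneg hfnn
  have hIg : (0:ℝ) ≤ ∫ t, g t ∂μ := integral_nonneg hgnn
  have keq1 : ∫ t, Real.sqrt (f t) * Real.sqrt (g t) ∂μ = ∫ t, |t| ^ (j + 1) ∂μ :=
    integral_congr_ae (ae_of_all _ hprod)
  have keq2 : ∫ t, Real.sqrt (f t) ^ (2:ℝ) ∂μ = ∫ t, f t ∂μ :=
    integral_congr_ae (ae_of_all _ fun t => hsq (f t) (hfnn t))
  have keq3 : ∫ t, Real.sqrt (g t) ^ (2:ℝ) ∂μ = ∫ t, g t ∂μ :=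
    integral_congr_ae (ae_of_all _ fun t => hsq (g t) (hgnn t))
  rw [keq1, keq2, keq3] at key
  have h2 : (∫ t, |t| ^ (j + 1) ∂μ) ^ 2 ≤
      ((∫ t, f t ∂μ) ^ ((1:ℝ)/2) * (∫ t, g t ∂μ) ^ ((1:ℝ)/2)) ^ 2 := by
    have hA : 0 ≤ ∫ t : ℝ, |t| ^ (j + 1) ∂μ := mom_nonneg μ (j + 1)
    exact pow_le_pow_left₀ hA key 2
  calc (∫ t : ℝ, |t| ^ (j + 1) ∂μ) ^ 2
      ≤ ((∫ t, f t ∂μ) ^ ((1:ℝ)/2) * (∫ t, g t ∂μ) ^ ((1:ℝ)/2)) ^ 2 := h2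
    _ = (∫ t, f t ∂μ) * ∫ t, g t ∂μ := by
        rw [mul_pow, ← Real.rpow_natCast ((∫ t, f t ∂μ) ^ ((1:ℝ)/2)) 2,
          ← Real.rpow_natCast ((∫ t, g t ∂μ) ^ ((1:ℝ)/2)) 2,
          ← Real.rpow_mul hIf, ← Real.rpow_mul hIg]
        norm_num

theorem theta_deriv_ge (μ : Measure ℝ) [IsFiniteMeasure μ] (hμ : μ ≠ 0)
    (k : ℕ) (hk : 1 ≤ k)
    (hmom : Integrable (fun t : ℝ => |t| ^ (2 * (k + 1))) μ)
    (y : ℝ) (hy : 0 < y) :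
    HasDerivAt (thetaFun μ) (∫ t : ℝ, 2 * y * t ^ 2 / (y ^ 2 + t ^ 2) ^ 2 ∂μ) y ∧
    2 * absMoment μ k ^ 2 * y /
        (absMoment μ (2 * (k - 1)) * y ^ 4 + 2 * absMoment μ (2 * k) * y ^ 2 +
          absMoment μ (2 * (k + 1))) ≤
      ∫ t : ℝ, 2 * y * t ^ 2 / (y ^ 2 + t ^ 2) ^ 2 ∂μ := by
  obtain ⟨j, rfl⟩ : ∃ j, k = j + 1 := ⟨k - 1, by omega⟩
  have hmom' : Integrable (fun t : ℝ => |t| ^ (2 * j + 4)) μ := by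
    have : 2 * (j + 1 + 1) = 2 * j + 4 := by ring
    rwa [this] at hmom
  have hd := deriv_integral μ y hy
  refine ⟨?_, ?_⟩
  · have heq : thetaFun μ = fun x => ∫ t : ℝ, x ^ 2 / (x ^ 2 + t ^ 2) ∂μ :=
      funext (theta_eq μ)
    rw [heq]
    exact hd.2
  · have hcs := cs_part μ j hmom' y hy hd.1
    have m1 := mom_int μ (2 * j) (by omega) hmom'
    have m2 := mom_int μ (2 * j + 2) (by omega) hmom'
    have hJ : ∫ t : ℝ, (y ^ 4 * |t| ^ (2 * j) + 2 * y ^ 2 * |t| ^ (2 * j + 2)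
          + |t| ^ (2 * j + 4)) / (2 * y) ∂μ
        = (y ^ 4 * absMoment μ (2 * j) + 2 * y ^ 2 * absMoment μ (2 * j + 2)
          + absMoment μ (2 * j + 4)) / (2 * y) := by
      have ia : Integrable (fun t : ℝ => y ^ 4 * |t| ^ (2 * j) + 2 * y ^ 2 * |t| ^ (2 * j + 2)) μ :=
        (m1.const_mul _).add (m2.const_mul _)
      have ib : Integrable (fun t : ℝ => y ^ 4 * |t| ^ (2 * j)) μ := m1.const_mul _
      have ic : Integrable (fun t : ℝ => 2 * y ^ 2 * |t| ^ (2 * j + 2)) μ := m2.const_mul _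
      rw [integral_div, integral_add ia hmom', integral_add ib ic,
        integral_const_mul, integral_const_mul]
      rfl
    rw [hJ] at hcs
    have i1 : j + 1 - 1 = j := by omega
    have i2 : 2 * (j + 1) = 2 * j + 2 := by ring
    have i3 : 2 * (j + 1 + 1) = 2 * j + 4 := by ring
    rw [i1, i2, i3]
    set A := absMoment μ (j + 1) with hA
    set M1 := absMoment μ (2 * j) with hM1
    set M2 := absMoment μ (2 * j + 2) with hM2
    set M3 := absMoment μ (2 * j + 4) with hM3
    set I := ∫ t : ℝ, 2 * y * t ^ 2 / (y ^ 2 + t ^ 2) ^ 2 ∂μ with hI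
    have hInn : 0 ≤ I := integral_nonneg fun t => by positivity
    have hM1n : 0 ≤ M1 := mom_nonneg μ _
    have hM2n : 0 ≤ M2 := mom_nonneg μ _
    have hM3n : 0 ≤ M3 := mom_nonneg μ _
    have hcs' : A ^ 2 ≤ I * ((y ^ 4 * M1 + 2 * y ^ 2 * M2 + M3) / (2 * y)) := hcs
    set D := M1 * y ^ 4 + 2 * M2 * y ^ 2 + M3 with hD
    have hDn : 0 ≤ D := by positivity
    rcases hDn.eq_or_lt with hD0 | hD0
    · rw [← hD0, div_zero]
      exact hInn
    · rw [div_le_iff₀ hD0]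
      have hS : (y ^ 4 * M1 + 2 * y ^ 2 * M2 + M3) / (2 * y) = D / (2 * y) := by
        rw [hD]; ring_nf
      rw [hS] at hcs'
      have h2 := mul_le_mul_of_nonneg_left hcs' (by positivity : (0:ℝ) ≤ 2 * y)
      have hne : (2 * y) ≠ 0 := by positivity
      have h3 : 2 * y * (I * (D / (2 * y))) = I * D := by
        rw [mul_left_comm, mul_comm (2 * y) (D / (2 * y)), div_mul_cancel₀ D hne]
      rw [h3] at h2
      nlinarith [h2]
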